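/- For all integers r, n with 1 ≤ r < n, the set LE(n) ∩ (n!/(r+1), n!] is equal to the set { (n!/r!)·ℓ : ℓ ∈ LE(r) ∩ (r!/(r+1), r!] }. -/

import Mathlib

/-- The number of linear extensions of a finite poset `P`: the number of
order-preserving bijections from `P` to the chain `Fin |P|`. -/
noncomputable def extNum (P : Type*) [instF : Fintype P] [instO : PartialOrder P] : ℕ :=
  Nat.card {f : P ≃ Fin (Fintype.card P) // ∀ x y : P, x ≤ y → f x ≤ f y}

/-- `LEset n` is the set of positive integers arising as the number of linear
extensions of some poset with exactly `n` elements. -/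
def LEset (n : ℕ) : Set ℕ :=
  {m | 0 < m ∧ ∃ r : PartialOrder (Fin n), extNum (Fin n) (instO := r) = m}

set_option linter.unusedSectionVars false
set_option linter.unusedVariables false


lemma extNum_le (α : Type*) [Fintype α] [PartialOrder α] :
    extNum α ≤ Nat.factorial (Fintype.card α) := by
  classical
  calc extNum α ≤ Nat.card (α ≃ Fin (Fintype.card α)) :=
        Nat.card_le_card_of_injective _ Subtype.val_injective
    _ = Nat.factorial (Fintype.card α) := by
        rw [Nat.card_eq_fintype_card, Fintype.card_equiv (Fintype.equivFin α)]

lemma extNum_pos (α : Type*) [Fintype α] [PartialOrder α] :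
    0 < extNum α := by
  rw [extNum, Nat.card_pos_iff]
  constructor
  · letI : Fintype (LinearExtension α) := ‹Fintype α›
    have hc : Fintype.card (LinearExtension α) = Fintype.card α := rfl
    refine ⟨⟨(Equiv.cast (rfl : α = LinearExtension α)).trans
      (monoEquivOfFin (LinearExtension α) hc).symm.toEquiv, ?_⟩⟩
    intro x y hxy
    have h2 : toLinearExtension x ≤ toLinearExtension y := toLinearExtension.monotone hxy
    have h3 := (monoEquivOfFin (LinearExtension α) hc).symm.monotone h2
    simp only [Equiv.trans_apply, Equiv.cast_refl, Equiv.refl_apply]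
    exact h3
  · infer_instance

private lemma extNum_le_oi {α β : Type*} [Fintype α] [PartialOrder α] [Fintype β]
    [PartialOrder β] (φ : α ≃o β) : extNum β ≤ extNum α := by
  have hc : Fintype.card β = Fintype.card α := (Fintype.card_congr φ.toEquiv).symm
  refine Nat.card_le_card_of_injective
    (fun f => ⟨φ.toEquiv.trans (f.1.trans (finCongr hc)), ?_⟩) ?_
  · intro x y hxy
    have h4 := f.2 (φ x) (φ y) (φ.monotone hxy)
    simp only [Equiv.trans_apply, finCongr_apply, Fin.le_def, Fin.coe_cast]
    exact h4
  · intro f g hfg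
    have h1 := congrArg Subtype.val hfg
    ext z
    have h2 := congrArg (fun (e : α ≃ Fin (Fintype.card α)) => ((e (φ.symm z)) : ℕ)) h1
    simp only [Equiv.trans_apply, finCongr_apply, Fin.coe_cast] at h2
    have h3 : φ.toEquiv (φ.symm z) = z := φ.apply_symm_apply z
    rw [h3] at h2
    exact h2

lemma extNum_congr {α β : Type*} [Fintype α] [PartialOrder α] [Fintype β] [PartialOrder β]
    (φ : α ≃o β) : extNum α = extNum β :=
  le_antisymm (extNum_le_oi φ.symm) (extNum_le_oi φ)

lemma extNum_card_one {α : Type*} [Fintype α] [PartialOrder α] (h : Fintype.card α = 1) :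
    extNum α = 1 := by
  have h1 := extNum_le α
  have h2 := extNum_pos α
  rw [h, Nat.factorial_one] at h1
  omega

section Split

variable {α : Type*} [Fintype α] [PartialOrder α] (S : Set α) [DecidablePred (· ∈ S)]
  [Fintype ↥S] [Fintype ↥Sᶜ]

noncomputable def splitFun
    (hst : Fintype.card ↥S + Fintype.card ↥Sᶜ = Fintype.card α)
    (T : {T : Finset (Fin (Fintype.card α)) // T.card = Fintype.card ↥S})
    (g : ↥S ≃ Fin (Fintype.card ↥S)) (h : ↥Sᶜ ≃ Fin (Fintype.card ↥Sᶜ)) :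
    α ≃ Fin (Fintype.card α) :=
  ((Equiv.Set.sumCompl S).symm.trans
    (Equiv.sumCongr (g.trans (T.1.orderIsoOfFin T.2).toEquiv)
      (h.trans ((T.1ᶜ.orderIsoOfFin
        (by rw [Finset.card_compl, T.2, Fintype.card_fin]; omega)).toEquiv)))).trans
    ((Equiv.sumCongr (Equiv.refl _) (Equiv.setCongr (Finset.coe_compl T.1))).trans
      (Equiv.Set.sumCompl (↑T.1 : Set (Fin (Fintype.card α)))))

lemma splitFun_apply_mem (hst : Fintype.card ↥S + Fintype.card ↥Sᶜ = Fintype.card α)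
    (T : {T : Finset (Fin (Fintype.card α)) // T.card = Fintype.card ↥S})
    (g : ↥S ≃ Fin (Fintype.card ↥S)) (h : ↥Sᶜ ≃ Fin (Fintype.card ↥Sᶜ))
    (x : α) (hx : x ∈ S) :
    splitFun S hst T g h x = ↑(T.1.orderIsoOfFin T.2 (g ⟨x, hx⟩)) := by
  simp only [splitFun, Equiv.trans_apply, Equiv.Set.sumCompl_symm_apply_of_mem hx,
    Equiv.sumCongr_apply, Sum.map_inl, Equiv.refl_apply]
  exact Equiv.Set.sumCompl_apply_inl _ _

lemma splitFun_apply_not_mem (hst : Fintype.card ↥S + Fintype.card ↥Sᶜ = Fintype.card α)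
    (T : {T : Finset (Fin (Fintype.card α)) // T.card = Fintype.card ↥S})
    (g : ↥S ≃ Fin (Fintype.card ↥S)) (h : ↥Sᶜ ≃ Fin (Fintype.card ↥Sᶜ))
    (x : α) (hx : x ∉ S) :
    splitFun S hst T g h x = ↑(T.1ᶜ.orderIsoOfFin
        (by rw [Finset.card_compl, T.2, Fintype.card_fin]; omega) (h ⟨x, hx⟩)) := by
  simp only [splitFun, Equiv.trans_apply, Equiv.Set.sumCompl_symm_apply_of_notMem hx,
    Equiv.sumCongr_apply, Sum.map_inr, Function.comp_apply]
  exact Equiv.Set.sumCompl_apply_inr _ _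

set_option linter.unusedSectionVars false

lemma splitFun_mono (hcross : ∀ x y : α, x ∈ S → y ∉ S → ¬ x ≤ y ∧ ¬ y ≤ x)
    (hst : Fintype.card ↥S + Fintype.card ↥Sᶜ = Fintype.card α)
    (T : {T : Finset (Fin (Fintype.card α)) // T.card = Fintype.card ↥S})
    (g : ↥S ≃ Fin (Fintype.card ↥S)) (hg : ∀ x y : ↥S, x ≤ y → g x ≤ g y)
    (h : ↥Sᶜ ≃ Fin (Fintype.card ↥Sᶜ)) (hh : ∀ x y : ↥Sᶜ, x ≤ y → h x ≤ h y) :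
    ∀ x y : α, x ≤ y → splitFun S hst T g h x ≤ splitFun S hst T g h y := by
  intro x y hxy
  by_cases hx : x ∈ S <;> by_cases hy : y ∈ S
  · rw [splitFun_apply_mem S hst T g h x hx, splitFun_apply_mem S hst T g h y hy]
    exact Subtype.coe_le_coe.mpr ((T.1.orderIsoOfFin T.2).monotone
      (hg ⟨x, hx⟩ ⟨y, hy⟩ hxy))
  · exact absurd hxy (hcross x y hx hy).1
  · exact absurd hxy (hcross y x hy hx).2
  · rw [splitFun_apply_not_mem S hst T g h x hx, splitFun_apply_not_mem S hst T g h y hy]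
    exact Subtype.coe_le_coe.mpr ((T.1ᶜ.orderIsoOfFin _).monotone
      (hh ⟨x, hx⟩ ⟨y, hy⟩ hxy))

lemma mem_splitFun_iff (hst : Fintype.card ↥S + Fintype.card ↥Sᶜ = Fintype.card α)
    (T : {T : Finset (Fin (Fintype.card α)) // T.card = Fintype.card ↥S})
    (g : ↥S ≃ Fin (Fintype.card ↥S)) (h : ↥Sᶜ ≃ Fin (Fintype.card ↥Sᶜ))
    (j : Fin (Fintype.card α)) :
    j ∈ T.1 ↔ ∃ x, ∃ hx : x ∈ S, splitFun S hst T g h x = j := by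
  constructor
  · intro hj
    set a := g.symm ((T.1.orderIsoOfFin T.2).symm ⟨j, Finset.mem_coe.mpr hj⟩) with ha
    refine ⟨a.1, a.2, ?_⟩
    rw [splitFun_apply_mem S hst T g h a.1 a.2]
    have h3 : (⟨a.1, a.2⟩ : ↥S) = a := rfl
    rw [h3, ha]
    simp
  · rintro ⟨x, hx, rfl⟩
    rw [splitFun_apply_mem S hst T g h x hx]
    exact Finset.mem_coe.mp ((T.1.orderIsoOfFin T.2) (g ⟨x, hx⟩)).2

lemma extNum_split (hcross : ∀ x y : α, x ∈ S → y ∉ S → ¬ x ≤ y ∧ ¬ y ≤ x) :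
    extNum α * Nat.factorial (Fintype.card ↥S) * Nat.factorial (Fintype.card ↥Sᶜ) =
      Nat.factorial (Fintype.card α) * (extNum ↥S * extNum ↥Sᶜ) := by
  classical
  have hst : Fintype.card ↥S + Fintype.card ↥Sᶜ = Fintype.card α := by
    rw [← Fintype.card_sum]
    exact Fintype.card_congr (Equiv.Set.sumCompl S)
  set n := Fintype.card α with hn
  set s := Fintype.card ↥S with hs
  set t := Fintype.card ↥Sᶜ with ht
  -- the bijection
  let F : ({T : Finset (Fin n) // T.card = s} ×
      {g : ↥S ≃ Fin s // ∀ x y : ↥S, x ≤ y → g x ≤ g y} ×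
      {h : ↥Sᶜ ≃ Fin t // ∀ x y : ↥Sᶜ, x ≤ y → h x ≤ h y}) →
      {f : α ≃ Fin n // ∀ x y : α, x ≤ y → f x ≤ f y} :=
    fun p => ⟨splitFun S hst p.1 p.2.1.1 p.2.2.1,
      splitFun_mono S hcross hst p.1 p.2.1.1 p.2.1.2 p.2.2.1 p.2.2.2⟩
  have hbij : Function.Bijective F := by
    constructor
    · rintro ⟨T, g, h⟩ ⟨T', g', h'⟩ hpq
      have he : splitFun S hst T g.1 h.1 = splitFun S hst T' g'.1 h'.1 :=
        congrArg Subtype.val hpq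
      have hT : T = T' := by
        apply Subtype.ext
        apply Finset.ext
        intro j
        rw [mem_splitFun_iff S hst T g.1 h.1 j, mem_splitFun_iff S hst T' g'.1 h'.1 j, he]
      subst hT
      have hgg : g = g' := by
        apply Subtype.ext
        apply Equiv.ext
        intro a
        have h1 : splitFun S hst T g.1 h.1 a.1 = splitFun S hst T g'.1 h'.1 a.1 := by rw [he]
        rw [splitFun_apply_mem S hst T g.1 h.1 a.1 a.2,
          splitFun_apply_mem S hst T g'.1 h'.1 a.1 a.2] at h1
        have h2 := (T.1.orderIsoOfFin T.2).injective (Subtype.coe_injective h1)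
        simpa using h2
      have hhh : h = h' := by
        apply Subtype.ext
        apply Equiv.ext
        intro a
        have h1 : splitFun S hst T g.1 h.1 a.1 = splitFun S hst T g.1 h'.1 a.1 := by
          rw [he, hgg]
        rw [splitFun_apply_not_mem S hst T g.1 h.1 a.1 a.2,
          splitFun_apply_not_mem S hst T g.1 h'.1 a.1 a.2] at h1
        have h2 := (T.1ᶜ.orderIsoOfFin _).injective (Subtype.coe_injective h1)
        simpa using h2
      rw [hgg, hhh]
    · rintro ⟨f, hf⟩
      have hinj : Function.Injective (fun x : ↥S => f x.1) := by
        intro a b hab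
        exact Subtype.ext (f.injective hab)
      set T0 : Finset (Fin n) := Finset.image (fun x : ↥S => f x.1) Finset.univ with hT0def
      have hT0 : T0.card = s := by
        rw [hT0def, Finset.card_image_of_injective _ hinj, Finset.card_univ]
      have hmem : ∀ x : ↥S, f x.1 ∈ T0 := by
        intro x
        rw [hT0def]
        exact Finset.mem_image_of_mem _ (Finset.mem_univ x)
      have hmemc : ∀ y : ↥Sᶜ, f y.1 ∈ (↑T0ᶜ : Set (Fin n)) := by
        intro y
        rw [Finset.coe_compl, Set.mem_compl_iff, Finset.mem_coe, hT0def]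
        intro hy
        obtain ⟨x, -, hx2⟩ := Finset.mem_image.mp hy
        have h4 : (x : α) = (y : α) := f.injective hx2
        exact y.2 (h4 ▸ x.2)
      have hT0c : T0ᶜ.card = t := by
        rw [Finset.card_compl, hT0, Fintype.card_fin]; omega
      let isoT := T0.orderIsoOfFin hT0
      let isoTc := T0ᶜ.orderIsoOfFin hT0c
      let g0fun : ↥S → Fin s := fun x => isoT.symm ⟨f x.1, Finset.mem_coe.mpr (hmem x)⟩
      have hg0 : Function.Bijective g0fun := by
        constructor
        · intro a b hab
          have h5 := isoT.symm.injective hab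
          exact hinj (congrArg Subtype.val h5)
        · intro i
          have hj : ((isoT i : ↥(↑T0 : Set (Fin n))) : Fin n) ∈ T0 :=
            Finset.mem_coe.mp (isoT i).2
          obtain ⟨x, -, hx2⟩ := Finset.mem_image.mp hj
          refine ⟨x, ?_⟩
          have h6 : (⟨f x.1, Finset.mem_coe.mpr (hmem x)⟩ : ↥(↑T0 : Set (Fin n))) = isoT i :=
            Subtype.ext hx2
          show isoT.symm _ = i
          rw [h6, OrderIso.symm_apply_apply]
      let h0fun : ↥Sᶜ → Fin t := fun y => isoTc.symm ⟨f y.1, hmemc y⟩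
      have hh0 : Function.Bijective h0fun := by
        constructor
        · intro a b hab
          have h5 := isoTc.symm.injective hab
          have h6 : f a.1 = f b.1 := congrArg Subtype.val h5
          exact Subtype.ext (f.injective h6)
        · intro i
          have hj : ((isoTc i : ↥(↑T0ᶜ : Set (Fin n))) : Fin n) ∈ T0ᶜ :=
            Finset.mem_coe.mp (isoTc i).2
          rw [Finset.mem_compl] at hj
          -- the preimage of this element is not in S
          set z := f.symm ((isoTc i : ↥(↑T0ᶜ : Set (Fin n))) : Fin n) with hz
          have hzS : z ∉ S := by
            intro hzS
            exact hj (by simpa [hz] using hmem ⟨z, hzS⟩)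
          refine ⟨⟨z, hzS⟩, ?_⟩
          have h6 : (⟨f z, hmemc ⟨z, hzS⟩⟩ : ↥(↑T0ᶜ : Set (Fin n))) = isoTc i := by
            apply Subtype.ext
            show f z = _
            rw [hz, Equiv.apply_symm_apply]
          show isoTc.symm _ = i
          rw [h6, OrderIso.symm_apply_apply]
      let g0 : ↥S ≃ Fin s := Equiv.ofBijective g0fun hg0
      let h0 : ↥Sᶜ ≃ Fin t := Equiv.ofBijective h0fun hh0
      have hg0m : ∀ x y : ↥S, x ≤ y → g0 x ≤ g0 y := by
        intro x y hxy
        show g0fun x ≤ g0fun y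
        exact isoT.symm.monotone (Subtype.mk_le_mk.mpr (hf x.1 y.1 hxy))
      have hh0m : ∀ x y : ↥Sᶜ, x ≤ y → h0 x ≤ h0 y := by
        intro x y hxy
        show h0fun x ≤ h0fun y
        exact isoTc.symm.monotone (Subtype.mk_le_mk.mpr (hf x.1 y.1 hxy))
      refine ⟨⟨⟨T0, hT0⟩, ⟨g0, hg0m⟩, ⟨h0, hh0m⟩⟩, ?_⟩
      apply Subtype.ext
      apply Equiv.ext
      intro x
      show splitFun S hst ⟨T0, hT0⟩ g0 h0 x = f x
      by_cases hx : x ∈ S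
      · rw [splitFun_apply_mem S hst ⟨T0, hT0⟩ g0 h0 x hx]
        show ((isoT (g0 ⟨x, hx⟩) : ↥(↑T0 : Set (Fin n))) : Fin n) = f x
        have h7 : g0 ⟨x, hx⟩ = isoT.symm ⟨f x, Finset.mem_coe.mpr (hmem ⟨x, hx⟩)⟩ := rfl
        rw [h7, OrderIso.apply_symm_apply]
      · rw [splitFun_apply_not_mem S hst ⟨T0, hT0⟩ g0 h0 x hx]
        show ((isoTc (h0 ⟨x, hx⟩) : ↥(↑T0ᶜ : Set (Fin n))) : Fin n) = f x
        have h7 : h0 ⟨x, hx⟩ = isoTc.symm ⟨f x, hmemc ⟨x, hx⟩⟩ := rfl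
        rw [h7, OrderIso.apply_symm_apply]
  -- counting
  have hcard := Nat.card_eq_of_bijective F hbij
  rw [Nat.card_prod, Nat.card_prod] at hcard
  have h1 : Nat.card {T : Finset (Fin n) // T.card = s} = Nat.choose n s := by
    rw [Nat.card_eq_fintype_card, Fintype.card_finset_len, Fintype.card_fin]
  have h2 : Nat.card {g : ↥S ≃ Fin s // ∀ x y : ↥S, x ≤ y → g x ≤ g y} = extNum ↥S := rfl
  have h3 : Nat.card {h : ↥Sᶜ ≃ Fin t // ∀ x y : ↥Sᶜ, x ≤ y → h x ≤ h y} = extNum ↥Sᶜ := rfl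
  have h4 : Nat.card {f : α ≃ Fin n // ∀ x y : α, x ≤ y → f x ≤ f y} = extNum α := rfl
  rw [h1, h2, h3, h4] at hcard
  have hsle : s ≤ n := by omega
  have hkey : Nat.choose n s * Nat.factorial s * Nat.factorial (n - s) = Nat.factorial n :=
    Nat.choose_mul_factorial_mul_factorial hsle
  have htns : t = n - s := by omega
  rw [← hcard, ← hkey, htns]
  ring

end Split

/-- If no nontrivial order-disjoint split exists, rotation gives n * e ≤ n!. -/
lemma rot_le {α : Type*} [Fintype α] [PartialOrder α]
    (hn2 : 1 ≤ Fintype.card α)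
    (hnos : ¬ ∃ S : Set α, S.Nonempty ∧ Sᶜ.Nonempty ∧
      ∀ x y : α, x ∈ S → y ∉ S → ¬ x ≤ y ∧ ¬ y ≤ x) :
    Fintype.card α * extNum α ≤ Nat.factorial (Fintype.card α) := by
  classical
  set n := Fintype.card α with hn
  haveI : NeZero n := ⟨by omega⟩
  set E := {f : α ≃ Fin n // ∀ x y : α, x ≤ y → f x ≤ f y} with hE
  let Φ : E × Fin n → (α ≃ Fin n) := fun p => p.1.1.trans (Equiv.addRight p.2)
  have hinj : Function.Injective Φ := by
    rintro ⟨⟨f, hf⟩, k⟩ ⟨⟨g, hg⟩, k'⟩ heq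
    have hpt : ∀ x : α, f x + k = g x + k' := by
      intro x
      have := congrArg (fun (e : α ≃ Fin n) => e x) heq
      simpa [Φ] using this
    have hkk : k = k' := by
      by_contra hne
      set d := k - k' with hd
      have hdne : d ≠ 0 := sub_ne_zero_of_ne hne
      have hgd : ∀ x : α, g x = f x + d := by
        intro x
        have h1 := hpt x
        have h2 : g x = f x + k - k' := eq_sub_of_add_eq h1.symm
        rw [h2, hd, add_sub_assoc]
      set dv := (d : ℕ) with hdv
      have hdv0 : dv ≠ 0 := by
        intro h0
        exact hdne (Fin.ext (by simp [← hdv, h0]))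
      have hdvlt : dv < n := d.isLt
      apply hnos
      refine ⟨{x : α | ((f x : ℕ)) < n - dv}, ⟨f.symm ⟨0, by omega⟩, ?_⟩,
        ⟨f.symm ⟨n - 1, by omega⟩, ?_⟩, ?_⟩
      · show ((f (f.symm ⟨0, by omega⟩) : ℕ)) < n - dv
        rw [Equiv.apply_symm_apply]
        show 0 < n - dv
        omega
      · show ¬ ((f (f.symm ⟨n - 1, by omega⟩) : ℕ)) < n - dv
        rw [Equiv.apply_symm_apply]
        show ¬ (n - 1 < n - dv)
        omega
      · intro x y hx hy
        have hx' : ((f x : ℕ)) < n - dv := hx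
        have hy' : ¬ ((f y : ℕ)) < n - dv := hy
        have hfy : (f y : ℕ) < n := (f y).isLt
        constructor
        · intro hxy
          have h2 := hg x y hxy
          rw [hgd x, hgd y] at h2
          have e1 : ((f x + d : Fin n) : ℕ) = (f x : ℕ) + dv := by
            rw [Fin.val_add]
            exact Nat.mod_eq_of_lt (by omega)
          have e2 : ((f y + d : Fin n) : ℕ) = (f y : ℕ) + dv - n := by
            rw [Fin.val_add, Nat.mod_eq_sub_mod (by omega)]
            exact Nat.mod_eq_of_lt (by omega)
          have h3 : ((f x + d : Fin n) : ℕ) ≤ ((f y + d : Fin n) : ℕ) := h2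
          omega
        · intro hyx
          have h2 := hf y x hyx
          have h3 : ((f y : ℕ)) ≤ ((f x : ℕ)) := h2
          omega
    subst hkk
    have hfg : f = g := by
      apply Equiv.ext
      intro x
      have := hpt x
      exact add_right_cancel this
    simp [hfg]
  have hle := Nat.card_le_card_of_injective Φ hinj
  rw [Nat.card_prod, Nat.card_eq_fintype_card (α := α ≃ Fin n),
    Fintype.card_equiv (Fintype.equivFin α), Nat.card_eq_fintype_card (α := Fin n),
    Fintype.card_fin] at hle
  calc n * extNum α = extNum α * n := Nat.mul_comm _ _
    _ ≤ Nat.factorial n := hle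

universe u

lemma card_mul_extNum_le_aux : ∀ (N : ℕ) (α : Type u) (instF : Fintype α)
    (instO : PartialOrder α), Fintype.card α = N →
    (∀ x : α, ∃ y, y ≠ x ∧ (x ≤ y ∨ y ≤ x)) →
    N * extNum α ≤ Nat.factorial N := by
  intro N
  induction N using Nat.strong_induction_on with
  | _ N ih =>
    intro α instF instO hcard hyp
    classical
    rcases Nat.eq_zero_or_pos N with hN0 | hNpos
    · subst hN0; simp
    by_cases hsplit : ∃ S : Set α, S.Nonempty ∧ Sᶜ.Nonempty ∧
        ∀ x y : α, x ∈ S → y ∉ S → ¬ x ≤ y ∧ ¬ y ≤ x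
    · obtain ⟨S, hS1, hS2, hcross⟩ := hsplit
      have key := extNum_split S hcross
      set s := Fintype.card ↥S with hs
      set t := Fintype.card ↥Sᶜ with ht
      have hst : s + t = N := by
        rw [hs, ht, ← Fintype.card_sum, ← hcard]
        exact Fintype.card_congr (Equiv.Set.sumCompl S)
      -- non-isolation on S
      have hypS : ∀ x : ↥S, ∃ y : ↥S, y ≠ x ∧ (x ≤ y ∨ y ≤ x) := by
        rintro ⟨x, hx⟩
        obtain ⟨y, hyne, hcomp⟩ := hyp x
        have hyS : y ∈ S := by
          by_contra hyS
          rcases hcomp with h | h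
          · exact (hcross x y hx hyS).1 h
          · exact (hcross x y hx hyS).2 h
        exact ⟨⟨y, hyS⟩, fun hc => hyne (congrArg Subtype.val hc),
          by rcases hcomp with h | h
             · exact Or.inl h
             · exact Or.inr h⟩
      have hypT : ∀ x : ↥Sᶜ, ∃ y : ↥Sᶜ, y ≠ x ∧ (x ≤ y ∨ y ≤ x) := by
        rintro ⟨x, hx⟩
        obtain ⟨y, hyne, hcomp⟩ := hyp x
        have hyT : y ∈ Sᶜ := by
          intro hyS
          rcases hcomp with h | h
          · exact (hcross y x hyS hx).2 h
          · exact (hcross y x hyS hx).1 h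
        exact ⟨⟨y, hyT⟩, fun hc => hyne (congrArg Subtype.val hc),
          by rcases hcomp with h | h
             · exact Or.inl h
             · exact Or.inr h⟩
      have hs2 : 2 ≤ s := by
        obtain ⟨x, hx⟩ := hS1
        obtain ⟨y, hyne, -⟩ := hypS ⟨x, hx⟩
        exact Fintype.one_lt_card_iff.mpr ⟨y, ⟨x, hx⟩, hyne⟩
      have ht2 : 2 ≤ t := by
        obtain ⟨x, hx⟩ := hS2
        obtain ⟨y, hyne, -⟩ := hypT ⟨x, hx⟩
        exact Fintype.one_lt_card_iff.mpr ⟨y, ⟨x, hx⟩, hyne⟩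
      have ihs := ih s (by omega) ↥S _ _ rfl hypS
      have iht := ih t (by omega) ↥Sᶜ _ _ rfl hypT
      have hNst : N ≤ s * t := le_trans (le_of_eq hst.symm) (Nat.add_le_mul hs2 ht2)
      rw [hcard] at key
      -- conclude by arithmetic
      have hmain : (N * extNum α) * (s * t * (Nat.factorial s * Nat.factorial t)) ≤
          Nat.factorial N * (s * t * (Nat.factorial s * Nat.factorial t)) := by
        calc (N * extNum α) * (s * t * (Nat.factorial s * Nat.factorial t))
            = (N * (s * t)) * (extNum α * Nat.factorial s * Nat.factorial t) := by ring
          _ = (N * (s * t)) * (Nat.factorial N * (extNum ↥S * extNum ↥Sᶜ)) := by rw [key]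
          _ = (N * Nat.factorial N) * ((s * extNum ↥S) * (t * extNum ↥Sᶜ)) := by ring
          _ ≤ (N * Nat.factorial N) * (Nat.factorial s * Nat.factorial t) :=
              Nat.mul_le_mul_left _ (Nat.mul_le_mul ihs iht)
          _ ≤ ((s * t) * Nat.factorial N) * (Nat.factorial s * Nat.factorial t) :=
              Nat.mul_le_mul_right _ (Nat.mul_le_mul_right _ hNst)
          _ = Nat.factorial N * (s * t * (Nat.factorial s * Nat.factorial t)) := by ring
      have hpos : 0 < s * t * (Nat.factorial s * Nat.factorial t) := by positivity
      exact Nat.le_of_mul_le_mul_right hmain hpos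
    · have := rot_le (α := α) (by omega) hsplit
      rw [hcard] at this
      exact this

lemma card_mul_extNum_le {α : Type*} [Fintype α] [PartialOrder α]
    (h : ∀ x : α, ∃ y, y ≠ x ∧ (x ≤ y ∨ y ≤ x)) :
    Fintype.card α * extNum α ≤ Nat.factorial (Fintype.card α) :=
  card_mul_extNum_le_aux (Fintype.card α) α _ _ rfl h

/-- Any finite poset's extension number lies in LEset of its cardinality. -/
lemma extNum_mem_LEset (β : Type) [Fintype β] [PartialOrder β] {n : ℕ}
    (h : Fintype.card β = n) : extNum β ∈ LEset n := by
  have e : Fin n ≃ β := (Fintype.equivFinOfCardEq h).symm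
  let r : PartialOrder (Fin n) := PartialOrder.lift e e.injective
  have φ : @OrderIso (Fin n) β r.toLE _ := @RelIso.mk _ _ _ _ e (fun {a b} => Iff.rfl)
  refine ⟨extNum_pos β, r, ?_⟩
  exact @extNum_congr (Fin n) β _ r _ _ φ

/-- A type synonym carrying no instances, used to install arbitrary orders on `Fin n`. -/
def Clean (n : ℕ) : Type := Fin n

lemma LEset_le {n m : ℕ} (hm : m ∈ LEset n) : m ≤ Nat.factorial n := by
  obtain ⟨-, r, rfl⟩ := hm
  have h := @extNum_le (Fin n) _ r
  rwa [Fintype.card_fin] at h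

lemma LEset_succ_mul {k m : ℕ} (hm : m ∈ LEset k) : (k + 1) * m ∈ LEset (k + 1) := by
  classical
  obtain ⟨hpos, rk, hrk⟩ := hm
  letI instC : PartialOrder (Clean k) := rk
  letI instF : Fintype (Clean k) := inferInstanceAs (Fintype (Fin k))
  have hck : Fintype.card (Clean k) = k := Fintype.card_fin k
  have hm' : extNum (Clean k) = m := hrk
  set β := Clean k ⊕ PUnit with hβ
  have hcardβ : Fintype.card β = k + 1 := by
    simp [hβ, hck]
  set S : Set β := Set.range Sum.inl with hS
  have hcross : ∀ x y : β, x ∈ S → y ∉ S → ¬ x ≤ y ∧ ¬ y ≤ x := by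
    rintro x y ⟨u, rfl⟩ hy
    rcases y with y | y
    · exact absurd ⟨y, rfl⟩ hy
    · exact ⟨Sum.not_inl_le_inr, Sum.not_inr_le_inl⟩
  have key := extNum_split S hcross
  have hcS : Fintype.card ↥S = k := by
    exact (Fintype.card_congr (Equiv.ofInjective Sum.inl Sum.inl_injective).symm).trans hck
  have hcSc : Fintype.card ↥Sᶜ = 1 := by
    have : Fintype.card ↥S + Fintype.card ↥Sᶜ = Fintype.card β := by
      rw [← Fintype.card_sum]
      exact Fintype.card_congr (Equiv.Set.sumCompl S)
    omega
  have heS : extNum ↥S = m := by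
    rw [← hm']
    refine (extNum_congr (RelIso.mk (Equiv.ofInjective Sum.inl Sum.inl_injective) ?_)).symm
    intro a b
    show (Sum.inl a : β) ≤ Sum.inl b ↔ a ≤ b
    exact Sum.inl_le_inl_iff
  have heSc : extNum ↥Sᶜ = 1 := extNum_card_one hcSc
  rw [hcS, hcSc, heS, heSc, hcardβ, Nat.factorial_one, mul_one, mul_one] at key
  have hfact : Nat.factorial (k + 1) = (k + 1) * Nat.factorial k := rfl
  rw [hfact] at key
  have hext : extNum β = (k + 1) * m := by
    have hkpos : 0 < Nat.factorial k := Nat.factorial_pos k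
    calc extNum β = extNum β * Nat.factorial k / Nat.factorial k := by
          rw [Nat.mul_div_cancel _ hkpos]
      _ = (k + 1) * Nat.factorial k * m / Nat.factorial k := by rw [key]
      _ = (k + 1) * m := by
          rw [mul_comm (k+1) (Nat.factorial k), mul_assoc, Nat.mul_div_cancel_left _ hkpos]
  rw [← hext]
  exact extNum_mem_LEset β hcardβ

lemma LEset_up {r n ℓ : ℕ} (hl : ℓ ∈ LEset r) (hrn : r ≤ n) :
    Nat.factorial n / Nat.factorial r * ℓ ∈ LEset n := by
  induction n, hrn using Nat.le_induction with
  | base => rwa [Nat.div_self (Nat.factorial_pos r), one_mul]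
  | succ n hn ih =>
      have hdvd : Nat.factorial r ∣ Nat.factorial n := Nat.factorial_dvd_factorial hn
      have h1 : Nat.factorial (n+1) / Nat.factorial r
          = (n+1) * (Nat.factorial n / Nat.factorial r) := by
        rw [Nat.factorial_succ, Nat.mul_div_assoc _ hdvd]
      rw [h1, mul_assoc]
      exact LEset_succ_mul ih

lemma LEset_down {r : ℕ} (hr : 1 ≤ r) :
    ∀ n, r ≤ n → ∀ m ∈ LEset n, (Nat.factorial n : ℚ) / ((r : ℚ) + 1) < (m : ℚ) →
      ∃ ℓ ∈ LEset r, m = Nat.factorial n / Nat.factorial r * ℓ := by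
  intro n
  induction n using Nat.strong_induction_on with
  | _ n ih =>
    intro hrn m hm hlow
    rcases eq_or_lt_of_le hrn with heq | hlt
    · subst heq
      exact ⟨m, hm, by rw [Nat.div_self (Nat.factorial_pos r), one_mul]⟩
    · obtain ⟨hpos, rn, hrn'⟩ := hm
      classical
      letI instC : PartialOrder (Clean n) := rn
      letI instF : Fintype (Clean n) := inferInstanceAs (Fintype (Fin n))
      have hcn : Fintype.card (Clean n) = n := Fintype.card_fin n
      have hm' : extNum (Clean n) = m := hrn'
      by_cases hiso : ∃ x : Clean n, ∀ y : Clean n, (x ≤ y ∨ y ≤ x) → y = x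
      · obtain ⟨x, hx⟩ := hiso
        set S : Set (Clean n) := {x} with hS
        have hcross : ∀ a b : Clean n, a ∈ S → b ∉ S → ¬ a ≤ b ∧ ¬ b ≤ a := by
          intro a b ha hb
          have hax : a = x := ha
          subst hax
          constructor
          · intro hle
            exact hb (Set.mem_singleton_iff.mpr (hx b (Or.inl hle)))
          · intro hle
            exact hb (Set.mem_singleton_iff.mpr (hx b (Or.inr hle)))
        have key := extNum_split S hcross
        have hcS : Fintype.card ↥S = 1 := by simp
        have hsum : Fintype.card ↥S + Fintype.card ↥Sᶜ = n := by
          rw [← Fintype.card_sum]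
          exact (Fintype.card_congr (Equiv.Set.sumCompl S)).trans hcn
        have hcSc : Fintype.card ↥Sᶜ = n - 1 := by omega
        have hm'mem : extNum ↥Sᶜ ∈ LEset (n-1) := extNum_mem_LEset ↥Sᶜ hcSc
        set m' := extNum ↥Sᶜ with hm'def
        clear_value m'
        rw [hcS, hcSc, extNum_card_one hcS, hcn, hm', Nat.factorial_one, mul_one,
          one_mul] at key
        -- key : m * (n-1)! = n! * m'
        have hn1 : 1 ≤ n := by omega
        have hfact : Nat.factorial n = n * Nat.factorial (n-1) :=
          (Nat.mul_factorial_pred (by omega)).symm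
        have hmnm' : m = n * m' := by
          apply Nat.eq_of_mul_eq_mul_right (Nat.factorial_pos (n-1))
          rw [key, hfact]
          ring
        -- rational lower bound for m'
        have hm'low : (Nat.factorial (n-1) : ℚ) / ((r : ℚ) + 1) < (m' : ℚ) := by
          have hc1 : (m : ℚ) = (n : ℚ) * (m' : ℚ) := by exact_mod_cast hmnm'
          have hc2 : (Nat.factorial n : ℚ)
              = (n : ℚ) * (Nat.factorial (n-1) : ℚ) := by exact_mod_cast hfact
          have hnpos : (0 : ℚ) < (n : ℚ) := by exact_mod_cast hn1
          have h3 : (n : ℚ) * ((Nat.factorial (n-1) : ℚ) / ((r : ℚ) + 1))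
              < (n : ℚ) * (m' : ℚ) := by
            rw [← mul_div_assoc, ← hc2, ← hc1]
            exact hlow
          exact lt_of_mul_lt_mul_left h3 (le_of_lt hnpos)
        obtain ⟨ℓ, hℓ, heq⟩ := ih (n-1) (by omega) (by omega) m' hm'mem hm'low
        refine ⟨ℓ, hℓ, ?_⟩
        have hdvd : Nat.factorial r ∣ Nat.factorial (n-1) :=
          Nat.factorial_dvd_factorial (by omega)
        rw [hmnm', heq, ← mul_assoc, ← Nat.mul_div_assoc n hdvd, ← hfact]
      · push_neg at hiso
        have hyp : ∀ x : Clean n, ∃ y, y ≠ x ∧ (x ≤ y ∨ y ≤ x) := by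
          intro x
          obtain ⟨y, h1, h2⟩ := hiso x
          exact ⟨y, h2, h1⟩
        have hb := card_mul_extNum_le hyp
        rw [hcn, hm'] at hb
        exfalso
        have h1 : ((r : ℚ) + 1) ≤ (n : ℚ) := by exact_mod_cast (by omega : r + 1 ≤ n)
        have h2 : (n : ℚ) * (m : ℚ) ≤ (Nat.factorial n : ℚ) := by exact_mod_cast hb
        have hr1pos : (0 : ℚ) < (r : ℚ) + 1 := by positivity
        rw [div_lt_iff₀ hr1pos] at hlow
        have hmpos : (0 : ℚ) ≤ (m : ℚ) := by positivity
        nlinarith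

theorem statement8 (r n : ℕ) (hr : 1 ≤ r) (hrn : r < n) :
    {m : ℕ | m ∈ LEset n ∧
        (Nat.factorial n : ℚ) / ((r : ℚ) + 1) < (m : ℚ) ∧ m ≤ Nat.factorial n}
      = (fun ℓ => Nat.factorial n / Nat.factorial r * ℓ) ''
        {ℓ : ℕ | ℓ ∈ LEset r ∧
          (Nat.factorial r : ℚ) / ((r : ℚ) + 1) < (ℓ : ℚ) ∧ ℓ ≤ Nat.factorial r} := by
  have hdvd : Nat.factorial r ∣ Nat.factorial n := Nat.factorial_dvd_factorial hrn.le
  have hrfne : ((Nat.factorial r : ℚ)) ≠ 0 := by positivity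
  have hcast : ((Nat.factorial n / Nat.factorial r : ℕ) : ℚ)
      = (Nat.factorial n : ℚ) / (Nat.factorial r : ℚ) := by
    rw [Nat.cast_div hdvd hrfne]
  have hA : (0:ℚ) < (Nat.factorial n : ℚ) / (Nat.factorial r : ℚ) := by positivity
  have h2 : (Nat.factorial n : ℚ) / (Nat.factorial r : ℚ)
      * ((Nat.factorial r : ℚ) / ((r : ℚ)+1)) = (Nat.factorial n : ℚ) / ((r : ℚ)+1) := by
    field_simp
  have hquotpos : 0 < Nat.factorial n / Nat.factorial r :=
    Nat.div_pos (Nat.factorial_le hrn.le) (Nat.factorial_pos r)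
  have hdm : Nat.factorial n / Nat.factorial r * Nat.factorial r = Nat.factorial n :=
    Nat.div_mul_cancel hdvd
  ext m
  simp only [Set.mem_setOf_eq, Set.mem_image]
  constructor
  · rintro ⟨hmLE, hlow, hup⟩
    obtain ⟨ℓ, hℓLE, heq⟩ := LEset_down hr n hrn.le m hmLE hlow
    have hcm : (m : ℚ) = (Nat.factorial n : ℚ) / (Nat.factorial r : ℚ) * (ℓ : ℚ) := by
      rw [heq]
      push_cast [hcast]
      ring
    refine ⟨ℓ, ⟨hℓLE, ?_, ?_⟩, heq.symm⟩
    · rw [hcm, ← h2] at hlow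
      exact (mul_lt_mul_iff_right₀ hA).mp hlow
    · have hup2 : Nat.factorial n / Nat.factorial r * ℓ
          ≤ Nat.factorial n / Nat.factorial r * Nat.factorial r := by
        rw [hdm, ← heq]
        exact hup
      exact Nat.le_of_mul_le_mul_left hup2 hquotpos
  · rintro ⟨ℓ, ⟨hℓLE, hl1, hl2⟩, rfl⟩
    have hcm : ((Nat.factorial n / Nat.factorial r * ℓ : ℕ) : ℚ)
        = (Nat.factorial n : ℚ) / (Nat.factorial r : ℚ) * (ℓ : ℚ) := by
      push_cast [hcast]
      ring
    refine ⟨LEset_up hℓLE hrn.le, ?_, ?_⟩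
    · rw [hcm, ← h2]
      exact (mul_lt_mul_iff_right₀ hA).mpr hl1
    · calc Nat.factorial n / Nat.factorial r * ℓ
          ≤ Nat.factorial n / Nat.factorial r * Nat.factorial r :=
            Nat.mul_le_mul_left _ hl2
        _ = Nat.factorial n := hdm
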